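/- The number of connected components of the set {(z₁,…,z_n) ∈ ℝ^n : zᵢ ≠ ±z_j for i≠j, zᵢ ∉ {0,1,-1}} equals 2^n (n+1)!. -/

import Mathlib

open Finset Fin

namespace CnProof

variable {n : ℕ}

def S (n : ℕ) : Set (Fin n → ℝ) :=
  {z | (∀ i j, i ≠ j → z i ≠ z j ∧ z i ≠ -z j) ∧ ∀ i, z i ≠ 0 ∧ z i ≠ 1 ∧ z i ≠ -1}

/-- sign as a real number -/
noncomputable def sg (ε : Fin n → Bool) (i : Fin n) : ℝ := if ε i then 1 else -1

lemma abs_eq_sg {ε : Fin n → Bool} {z : Fin n → ℝ} {i : Fin n}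
    (h : 0 < sg ε i * z i) : |z i| = sg ε i * z i := by
  unfold sg at *
  by_cases hb : ε i <;> simp [hb] at h ⊢
  · exact h.le
  · exact h.le

/-- the missing rank: the unique element of `Fin (n+1)` not in the range of `r` -/
noncomputable def miss (r : Fin n ↪ Fin (n + 1)) : Fin (n + 1) :=
  (univ.filter fun k => ∀ i, r i ≠ k).min' (by
    rw [filter_nonempty_iff]
    by_contra h
    push_neg at h
    have hsurj : Function.Surjective r := by
      intro k
      obtain ⟨i, hi⟩ := h k (mem_univ k)
      exact ⟨i, hi⟩
    have := Fintype.card_le_of_surjective r hsurj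
    simp [Fintype.card_fin] at this)

lemma miss_not_mem (r : Fin n ↪ Fin (n + 1)) (i : Fin n) : r i ≠ miss r := by
  have := min'_mem (univ.filter fun k => ∀ i, r i ≠ k) (by
    rw [filter_nonempty_iff]
    by_contra h
    push_neg at h
    have hsurj : Function.Surjective r := by
      intro k
      obtain ⟨i, hi⟩ := h k (mem_univ k)
      exact ⟨i, hi⟩
    have := Fintype.card_le_of_surjective r hsurj
    simp [Fintype.card_fin] at this)
  rw [mem_filter] at this
  exact this.2 i

lemma miss_unique {r : Fin n ↪ Fin (n + 1)} {k : Fin (n + 1)}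
    (hk : ∀ i, r i ≠ k) : k = miss r := by
  have hfe : (univ.filter fun k => ∀ i, r i ≠ k) = univ \ univ.image r := by
    ext m
    simp only [mem_filter, mem_univ, true_and, mem_sdiff, mem_image]
    aesop
  have hcard : (univ.filter fun k => ∀ i, r i ≠ k).card ≤ 1 := by
    rw [hfe, card_sdiff_of_subset (subset_univ _), card_univ, Fintype.card_fin,
      card_image_of_injective _ r.injective, card_univ, Fintype.card_fin]
    omega
  have hm := min'_mem (univ.filter fun k => ∀ i, r i ≠ k) ⟨k, by simpa using hk⟩
  have hkmem : k ∈ univ.filter fun k => ∀ i, r i ≠ k := by simpa using hk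
  exact Finset.card_le_one.mp hcard k hkmem _ hm

/-- extend `r` to a bijection of `Fin (n+1)` sending `last` to the missing rank -/
noncomputable def extMap (r : Fin n ↪ Fin (n + 1)) : Fin (n + 1) → Fin (n + 1) :=
  Fin.snoc (⇑r) (miss r)

lemma extMap_castSucc (r : Fin n ↪ Fin (n + 1)) (i : Fin n) :
    extMap r i.castSucc = r i := Fin.snoc_castSucc ..

lemma extMap_last (r : Fin n ↪ Fin (n + 1)) : extMap r (Fin.last n) = miss r :=
  Fin.snoc_last ..

lemma extMap_inj (r : Fin n ↪ Fin (n + 1)) : Function.Injective (extMap r) := by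
  intro j k
  induction j using Fin.lastCases with
  | last =>
    induction k using Fin.lastCases with
    | last => intro _; rfl
    | cast i =>
      intro h
      rw [extMap_last, extMap_castSucc] at h
      exact absurd h.symm (miss_not_mem r i)
  | cast i =>
    induction k using Fin.lastCases with
    | last =>
      intro h
      rw [extMap_last, extMap_castSucc] at h
      exact absurd h (miss_not_mem r i)
    | cast j =>
      intro h
      rw [extMap_castSucc, extMap_castSucc] at h
      exact congrArg Fin.castSucc (r.injective h)

lemma extMap_bij (r : Fin n ↪ Fin (n + 1)) : Function.Bijective (extMap r) :=
  Finite.injective_iff_bijective.mp (extMap_inj r)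

/-- the open convex region attached to a sign vector and a rank embedding -/
def C (ε : Fin n → Bool) (r : Fin n ↪ Fin (n + 1)) : Set (Fin n → ℝ) :=
  {z | (∀ i, 0 < sg ε i * z i) ∧
       (∀ i j, r i < r j → sg ε i * z i < sg ε j * z j) ∧
       (∀ i, r i < miss r → sg ε i * z i < 1) ∧
       (∀ i, miss r < r i → 1 < sg ε i * z i)}

lemma C_eq (ε : Fin n → Bool) (r : Fin n ↪ Fin (n + 1)) :
    C ε r = (⋂ i, {z : Fin n → ℝ | 0 < sg ε i * z i}) ∩
      ((⋂ i, ⋂ j, {z : Fin n → ℝ | r i < r j → sg ε i * z i < sg ε j * z j}) ∩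
       ((⋂ i, {z : Fin n → ℝ | r i < miss r → sg ε i * z i < 1}) ∩
        (⋂ i, {z : Fin n → ℝ | miss r < r i → 1 < sg ε i * z i}))) := by
  ext z
  simp [C, Set.mem_iInter, and_assoc]

lemma isLinear_coord (i : Fin n) (c : ℝ) :
    IsLinearMap ℝ (fun z : Fin n → ℝ => c * z i) :=
  ⟨fun x y => by simp [Pi.add_apply, mul_add], fun a x => by
    simp [Pi.smul_apply, smul_eq_mul]; ring⟩

lemma isLinear_coord2 (i j : Fin n) (c d : ℝ) :
    IsLinearMap ℝ (fun z : Fin n → ℝ => c * z i - d * z j) :=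
  ⟨fun x y => by simp [Pi.add_apply]; ring, fun a x => by
    simp [Pi.smul_apply, smul_eq_mul]; ring⟩

lemma convex_C (ε : Fin n → Bool) (r : Fin n ↪ Fin (n + 1)) : Convex ℝ (C ε r) := by
  rw [C_eq]
  refine Convex.inter (convex_iInter fun i => convex_halfSpace_gt (isLinear_coord i _) 0)
    (Convex.inter (convex_iInter fun i => convex_iInter fun j => ?_)
      (Convex.inter (convex_iInter fun i => ?_) (convex_iInter fun i => ?_)))
  · by_cases h : r i < r j
    · simp only [h, true_implies]
      have : {z : Fin n → ℝ | sg ε i * z i < sg ε j * z j}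
          = {z : Fin n → ℝ | 0 < sg ε j * z j - sg ε i * z i} := by
        ext z; simp [sub_pos]
      rw [this]
      exact convex_halfSpace_gt (isLinear_coord2 j i _ _) 0
    · simp only [h, false_implies, Set.setOf_true]
      exact convex_univ
  · by_cases h : r i < miss r
    · simp only [h, true_implies]
      exact convex_halfSpace_lt (isLinear_coord i _) 1
    · simp only [h, false_implies, Set.setOf_true]
      exact convex_univ
  · by_cases h : miss r < r i
    · simp only [h, true_implies]
      exact convex_halfSpace_gt (isLinear_coord i _) 1
    · simp only [h, false_implies, Set.setOf_true]
      exact convex_univ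

lemma isOpen_C (ε : Fin n → Bool) (r : Fin n ↪ Fin (n + 1)) : IsOpen (C ε r) := by
  rw [C_eq]
  have hco : ∀ (i : Fin n) (c : ℝ), Continuous (fun z : Fin n → ℝ => c * z i) :=
    fun i c => continuous_const.mul (continuous_apply i)
  refine IsOpen.inter (isOpen_iInter_of_finite fun i => isOpen_lt continuous_const (hco i _))
    (IsOpen.inter (isOpen_iInter_of_finite fun i => isOpen_iInter_of_finite fun j => ?_)
      (IsOpen.inter (isOpen_iInter_of_finite fun i => ?_)
        (isOpen_iInter_of_finite fun i => ?_)))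
  · by_cases h : r i < r j
    · simp only [h, true_implies]
      exact isOpen_lt (hco i _) (hco j _)
    · simp only [h, false_implies, Set.setOf_true]
      exact isOpen_univ
  · by_cases h : r i < miss r
    · simp only [h, true_implies]
      exact isOpen_lt (hco i _) continuous_const
    · simp only [h, false_implies, Set.setOf_true]
      exact isOpen_univ
  · by_cases h : miss r < r i
    · simp only [h, true_implies]
      exact isOpen_lt continuous_const (hco i _)
    · simp only [h, false_implies, Set.setOf_true]
      exact isOpen_univ

lemma C_subset_S (ε : Fin n → Bool) (r : Fin n ↪ Fin (n + 1)) : C ε r ⊆ S n := by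
  rintro z ⟨h0, h2, h3, h4⟩
  have habs : ∀ i, |z i| = sg ε i * z i := fun i => abs_eq_sg (h0 i)
  have habs_ne : ∀ i j, i ≠ j → |z i| ≠ |z j| := by
    intro i j hij
    rcases lt_trichotomy (r i) (r j) with h | h | h
    · rw [habs, habs]; exact ne_of_lt (h2 i j h)
    · exact absurd (r.injective h) hij
    · rw [habs, habs]; exact (ne_of_lt (h2 j i h)).symm
  constructor
  · intro i j hij
    have hne := habs_ne i j hij
    constructor
    · intro he; exact hne (by rw [he])
    · intro he; exact hne (by rw [he, abs_neg])
  · intro i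
    have h1 : |z i| ≠ 1 := by
      rcases lt_trichotomy (r i) (miss r) with h | h | h
      · rw [habs]; exact ne_of_lt (h3 i h)
      · exact absurd h (miss_not_mem r i)
      · rw [habs]; exact (ne_of_lt (h4 i h)).symm
    refine ⟨?_, ?_, ?_⟩
    · intro he; have := h0 i; rw [he, mul_zero] at this; exact lt_irrefl 0 this
    · intro he; apply h1; rw [he]; exact abs_one
    · intro he; apply h1; rw [he, abs_neg, abs_one]

/-- the augmented tuple of absolute values, with `1` appended -/
noncomputable def tt (z : Fin n → ℝ) : Fin (n + 1) → ℝ := Fin.snoc (fun i => |z i|) 1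

lemma tt_castSucc (z : Fin n → ℝ) (i : Fin n) : tt z i.castSucc = |z i| :=
  Fin.snoc_castSucc ..

lemma tt_last (z : Fin n → ℝ) : tt z (Fin.last n) = 1 := Fin.snoc_last ..

noncomputable def rk (z : Fin n → ℝ) (k : Fin (n + 1)) : ℕ :=
  (univ.filter fun j => tt z j < tt z k).card

lemma rk_lt (z : Fin n → ℝ) (k : Fin (n + 1)) : rk z k < n + 1 := by
  have hsub : (univ.filter fun j => tt z j < tt z k) ⊆ univ.erase k := by
    intro j hj
    rw [mem_filter] at hj
    rw [mem_erase]
    exact ⟨fun h => by rw [h] at hj; exact lt_irrefl _ hj.2, mem_univ j⟩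
  have := card_le_card hsub
  rw [card_erase_of_mem (mem_univ k), card_univ, Fintype.card_fin] at this
  unfold rk
  omega

noncomputable def rkf (z : Fin n → ℝ) (k : Fin (n + 1)) : Fin (n + 1) :=
  ⟨rk z k, rk_lt z k⟩

lemma rk_mono {z : Fin n → ℝ} {j k : Fin (n + 1)} (h : tt z j < tt z k) :
    rkf z j < rkf z k := by
  have hsub : (univ.filter fun a => tt z a < tt z j)
      ⊆ (univ.filter fun a => tt z a < tt z k) := by
    intro a ha
    rw [mem_filter] at ha ⊢
    exact ⟨mem_univ a, lt_trans ha.2 h⟩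
  have hmem : j ∈ univ.filter fun a => tt z a < tt z k := by
    rw [mem_filter]; exact ⟨mem_univ j, h⟩
  have hnot : j ∉ univ.filter fun a => tt z a < tt z j := by
    rw [mem_filter]; exact fun hh => lt_irrefl _ hh.2
  exact card_lt_card ((Finset.ssubset_iff_of_subset hsub).mpr ⟨j, hmem, hnot⟩)

lemma rk_iff {z : Fin n → ℝ} (hinj : Function.Injective (tt z)) {j k : Fin (n + 1)} :
    rkf z j < rkf z k ↔ tt z j < tt z k := by
  constructor
  · intro h
    rcases lt_trichotomy (tt z j) (tt z k) with h' | h' | h'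
    · exact h'
    · rw [hinj h'] at h; exact absurd h (lt_irrefl _)
    · exact absurd (rk_mono h') (not_lt.mpr (le_of_lt h))
  · exact rk_mono

lemma rkf_inj {z : Fin n → ℝ} (hinj : Function.Injective (tt z)) :
    Function.Injective (rkf z) := by
  intro j k h
  apply hinj
  rcases lt_trichotomy (tt z j) (tt z k) with h' | h' | h'
  · have := rk_mono h'; rw [h] at this; exact absurd this (lt_irrefl _)
  · exact h'
  · have := rk_mono h'; rw [h] at this; exact absurd this (lt_irrefl _)

lemma tt_inj {z : Fin n → ℝ} (hz : z ∈ S n) : Function.Injective (tt z) := by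
  intro j k
  induction j using Fin.lastCases with
  | last =>
    induction k using Fin.lastCases with
    | last => intro _; rfl
    | cast i =>
      intro h
      rw [tt_last, tt_castSucc] at h
      rcases (abs_eq (by norm_num : (0:ℝ) ≤ 1)).mp h.symm with h' | h'
      · exact absurd h' (hz.2 i).2.1
      · exact absurd h' (hz.2 i).2.2
  | cast i =>
    induction k using Fin.lastCases with
    | last =>
      intro h
      rw [tt_last, tt_castSucc] at h
      rcases (abs_eq (by norm_num : (0:ℝ) ≤ 1)).mp h with h' | h'
      · exact absurd h' (hz.2 i).2.1
      · exact absurd h' (hz.2 i).2.2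
    | cast j =>
      intro h
      rw [tt_castSucc, tt_castSucc] at h
      by_contra hne
      have hij : i ≠ j := fun hh => hne (by rw [hh])
      rcases abs_eq_abs.mp h with h' | h'
      · exact (hz.1 i j hij).1 h'
      · exact (hz.1 i j hij).2 h'

/-- the sign pattern of a point -/
noncomputable def eps (z : Fin n → ℝ) (i : Fin n) : Bool := decide (0 < z i)

lemma sg_eps_pos {z : Fin n → ℝ} (hz : z ∈ S n) (i : Fin n) :
    0 < sg (eps z) i * z i := by
  unfold sg eps
  by_cases h : 0 < z i
  · simp [h]
  · have hlt : z i < 0 := lt_of_le_of_ne (not_lt.mp h) (hz.2 i).1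
    simp [h]
    linarith

noncomputable def remb (z : Fin n → ℝ) (hz : z ∈ S n) : Fin n ↪ Fin (n + 1) :=
  ⟨fun i => rkf z i.castSucc, fun i j h =>
    Fin.castSucc_injective n (rkf_inj (tt_inj hz) h)⟩

lemma miss_remb {z : Fin n → ℝ} (hz : z ∈ S n) :
    miss (remb z hz) = rkf z (Fin.last n) := by
  refine (miss_unique fun i => ?_).symm
  intro h
  have := rkf_inj (tt_inj hz) h
  exact absurd this (Fin.ne_last_of_lt (Fin.castSucc_lt_last i))

lemma mem_C_self {z : Fin n → ℝ} (hz : z ∈ S n) : z ∈ C (eps z) (remb z hz) := by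
  have hinj := tt_inj hz
  have habs : ∀ i, sg (eps z) i * z i = |z i| :=
    fun i => (abs_eq_sg (sg_eps_pos hz i)).symm
  refine ⟨sg_eps_pos hz, ?_, ?_, ?_⟩
  · intro i j h
    rw [habs, habs, ← tt_castSucc z i, ← tt_castSucc z j]
    exact (rk_iff hinj).mp h
  · intro i h
    rw [miss_remb hz] at h
    rw [habs, ← tt_castSucc z i, ← tt_last z]
    exact (rk_iff hinj).mp h
  · intro i h
    rw [miss_remb hz] at h
    rw [habs, ← tt_castSucc z i, ← tt_last z]
    exact (rk_iff hinj).mp h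

lemma tt_lt_iff {ε : Fin n → Bool} {r : Fin n ↪ Fin (n + 1)} {z : Fin n → ℝ}
    (hc : z ∈ C ε r) (j k : Fin (n + 1)) :
    tt z j < tt z k ↔ extMap r j < extMap r k := by
  obtain ⟨h0, h2, h3, h4⟩ := hc
  have habs : ∀ i, |z i| = sg ε i * z i := fun i => abs_eq_sg (h0 i)
  have key : ∀ a b : Fin n, (|z a| < |z b| ↔ r a < r b) := by
    intro a b
    rw [habs, habs]
    constructor
    · intro h
      rcases lt_trichotomy (r a) (r b) with h' | h' | h'
      · exact h'
      · rw [show a = b from r.injective h'] at h; exact absurd h (lt_irrefl _)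
      · exact absurd (h2 b a h') (not_lt.mpr (le_of_lt h))
    · exact h2 a b
  have key1 : ∀ a : Fin n, (|z a| < 1 ↔ r a < miss r) := by
    intro a
    rw [habs]
    constructor
    · intro h
      rcases lt_trichotomy (r a) (miss r) with h' | h' | h'
      · exact h'
      · exact absurd h' (miss_not_mem r a)
      · exact absurd (h4 a h') (not_lt.mpr (le_of_lt h))
    · exact h3 a
  have key2 : ∀ a : Fin n, (1 < |z a| ↔ miss r < r a) := by
    intro a
    rw [habs]
    constructor
    · intro h
      rcases lt_trichotomy (r a) (miss r) with h' | h' | h'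
      · exact absurd (h3 a h') (not_lt.mpr (le_of_lt h))
      · exact absurd h' (miss_not_mem r a)
      · exact h'
    · exact h4 a
  induction j using Fin.lastCases with
  | last =>
    induction k using Fin.lastCases with
    | last => simp
    | cast b =>
      rw [tt_last, tt_castSucc, extMap_last, extMap_castSucc]
      exact key2 b
  | cast a =>
    induction k using Fin.lastCases with
    | last =>
      rw [tt_last, tt_castSucc, extMap_last, extMap_castSucc]
      exact key1 a
    | cast b =>
      rw [tt_castSucc, tt_castSucc, extMap_castSucc, extMap_castSucc]
      exact key a b

lemma rkf_eq_extMap {ε : Fin n → Bool} {r : Fin n ↪ Fin (n + 1)} {z : Fin n → ℝ}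
    (hc : z ∈ C ε r) (k : Fin (n + 1)) : rkf z k = extMap r k := by
  apply Fin.ext
  show rk z k = ((extMap r k : Fin (n + 1)) : ℕ)
  unfold rk
  have hfe : (univ.filter fun j => tt z j < tt z k)
      = (univ.filter fun j => extMap r j < extMap r k) := by
    ext j
    simp [tt_lt_iff hc j k]
  rw [hfe]
  rw [show (univ.filter fun j => extMap r j < extMap r k).card
      = (Finset.Iio (extMap r k)).card from ?_]
  · exact Fin.card_Iio (extMap r k)
  · refine card_nbij (extMap r) ?_ ?_ ?_
    · intro a ha
      rw [Finset.mem_coe, mem_filter] at ha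
      rw [Finset.mem_coe, Finset.mem_Iio]
      exact ha.2
    · exact fun a _ b _ h => extMap_inj r h
    · intro m hm
      simp only [coe_filter, Set.mem_setOf_eq, Finset.coe_Iio, Set.mem_Iio] at hm ⊢
      obtain ⟨j, hj⟩ := (extMap_bij r).2 m
      exact ⟨j, ⟨mem_univ j, by rw [hj]; exact hm⟩, hj⟩

lemma eps_eq {ε : Fin n → Bool} {r : Fin n ↪ Fin (n + 1)} {z : Fin n → ℝ}
    (hc : z ∈ C ε r) : eps z = ε := by
  funext i
  have h := hc.1 i
  unfold sg at h
  unfold eps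
  by_cases hb : ε i
  · simp [hb] at h ⊢; exact h
  · simp [hb] at h ⊢; linarith

lemma remb_eq {ε : Fin n → Bool} {r : Fin n ↪ Fin (n + 1)} {z : Fin n → ℝ}
    (hc : z ∈ C ε r) (hz : z ∈ S n) : remb z hz = r := by
  apply DFunLike.ext
  intro i
  show rkf z i.castSucc = r i
  rw [rkf_eq_extMap hc, extMap_castSucc]

/-- explicit witness point in each region -/
noncomputable def wit (ε : Fin n → Bool) (r : Fin n ↪ Fin (n + 1)) : Fin n → ℝ :=
  fun i => sg ε i * (((r i : ℕ) : ℝ) + 1) / (((miss r : ℕ) : ℝ) + 1)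

lemma sg_mul_self (ε : Fin n → Bool) (i : Fin n) : sg ε i * sg ε i = 1 := by
  unfold sg; by_cases h : ε i <;> simp [h]

lemma wit_mem (ε : Fin n → Bool) (r : Fin n ↪ Fin (n + 1)) : wit ε r ∈ C ε r := by
  have hd : (0:ℝ) < ((miss r : ℕ) : ℝ) + 1 := by positivity
  have hval : ∀ i, sg ε i * wit ε r i = (((r i : ℕ) : ℝ) + 1) / (((miss r : ℕ) : ℝ) + 1) := by
    intro i
    unfold wit
    field_simp
    rw [sq, sg_mul_self]
  refine ⟨?_, ?_, ?_, ?_⟩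
  · intro i
    rw [hval i]
    positivity
  · intro i j h
    rw [hval i, hval j]
    have hlt : ((r i : ℕ) : ℝ) + 1 < ((r j : ℕ) : ℝ) + 1 := by
      have : ((r i : ℕ) : ℝ) < ((r j : ℕ) : ℝ) := by exact_mod_cast h
      linarith
    gcongr
  · intro i h
    rw [hval i]
    rw [div_lt_one hd]
    have : ((r i : ℕ) : ℝ) < ((miss r : ℕ) : ℝ) := by exact_mod_cast h
    linarith
  · intro i h
    rw [hval i]
    rw [one_lt_div hd]
    have : ((miss r : ℕ) : ℝ) < ((r i : ℕ) : ℝ) := by exact_mod_cast h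
    linarith


abbrev T (n : ℕ) := (Fin n → Bool) × (Fin n ↪ Fin (n + 1))

/-- the locally constant invariant -/
noncomputable def F (n : ℕ) : ↥(S n) → T n := fun x => (eps ↑x, remb ↑x x.2)

lemma F_eq_of_mem_C {ε : Fin n → Bool} {r : Fin n ↪ Fin (n + 1)} {x : ↥(S n)}
    (hx : ↑x ∈ C ε r) : F n x = (ε, r) := by
  unfold F
  rw [eps_eq hx, remb_eq hx x.2]

lemma mem_C_F (x : ↥(S n)) : ↑x ∈ C (F n x).1 (F n x).2 := mem_C_self x.2

lemma F_fiber (t : T n) : F n ⁻¹' {t} = Subtype.val ⁻¹' C t.1 t.2 := by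
  ext x
  simp only [Set.mem_preimage, Set.mem_singleton_iff]
  constructor
  · rintro rfl
    exact mem_C_F x
  · intro h
    exact F_eq_of_mem_C h

lemma F_locConst : IsLocallyConstant (F n) := by
  intro s
  have : F n ⁻¹' s = ⋃ t : s, F n ⁻¹' {(t : T n)} := by
    ext x
    simp
  rw [this]
  refine isOpen_iUnion fun t => ?_
  rw [F_fiber]
  exact (isOpen_C _ _).preimage continuous_subtype_val

lemma preconn_fiber (ε : Fin n → Bool) (r : Fin n ↪ Fin (n + 1)) :
    IsPreconnected (Subtype.val ⁻¹' C ε r : Set ↥(S n)) := by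
  rw [← Topology.IsInducing.subtypeVal.isPreconnected_image]
  have : Subtype.val '' (Subtype.val ⁻¹' C ε r : Set ↥(S n)) = C ε r := by
    rw [Subtype.image_preimage_coe]
    exact Set.inter_eq_right.mpr (C_subset_S ε r)
  rw [this]
  exact (convex_C ε r).isPreconnected

lemma mk_eq_of_mem_C {ε : Fin n → Bool} {r : Fin n ↪ Fin (n + 1)} {x y : ↥(S n)}
    (hx : ↑x ∈ C ε r) (hy : ↑y ∈ C ε r) :
    ConnectedComponents.mk x = ConnectedComponents.mk y := by
  rw [ConnectedComponents.coe_eq_coe]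
  have hmem : y ∈ connectedComponent x :=
    (preconn_fiber ε r).subset_connectedComponent hx hy
  exact connectedComponent_eq hmem

noncomputable def witS (t : T n) : ↥(S n) :=
  ⟨wit t.1 t.2, C_subset_S _ _ (wit_mem t.1 t.2)⟩

noncomputable def g (n : ℕ) : T n → ConnectedComponents ↥(S n) :=
  fun t => ConnectedComponents.mk (witS t)

lemma g_bij : Function.Bijective (g n) := by
  constructor
  · intro t t' h
    have hmem : witS t' ∈ connectedComponent (witS (n := n) t) := by
      have := ConnectedComponents.coe_eq_coe.mp h
      rw [this]
      exact mem_connectedComponent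
    have hFF : F n (witS t) = F n (witS t') :=
      F_locConst.apply_eq_of_isPreconnected isPreconnected_connectedComponent
        mem_connectedComponent hmem
    have h1 : F n (witS t) = t := F_eq_of_mem_C (wit_mem t.1 t.2)
    have h2 : F n (witS t') = t' := F_eq_of_mem_C (wit_mem t'.1 t'.2)
    rw [h1, h2] at hFF
    exact hFF
  · intro c
    obtain ⟨x, rfl⟩ := ConnectedComponents.surjective_coe c
    refine ⟨F n x, ?_⟩
    exact mk_eq_of_mem_C (wit_mem (F n x).1 (F n x).2) (mem_C_F x)

lemma descFactorial_succ_self (n : ℕ) :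
    (n + 1).descFactorial n = Nat.factorial (n + 1) := by
  induction n with
  | zero => rfl
  | succ m ih =>
    rw [Nat.succ_descFactorial_succ, ih]
    rw [Nat.factorial_succ (m+1), Nat.factorial_succ m]

lemma card_T (n : ℕ) : Nat.card (T n) = 2 ^ n * Nat.factorial (n + 1) := by
  rw [Nat.card_eq_fintype_card, Fintype.card_prod, Fintype.card_fun,
    Fintype.card_embedding_eq, Fintype.card_fin, Fintype.card_fin, Fintype.card_bool,
    descFactorial_succ_self]

lemma main (n : ℕ) :
    Nat.card (ConnectedComponents ↥(S n)) = 2 ^ n * Nat.factorial (n + 1) := by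
  rw [← Nat.card_eq_of_bijective (g n) g_bij, card_T]

end CnProof

/-- **Real components of the arrangement `Z̊ₙ`.** The set of `(z₁,…,z_n) ∈ ℝ^n` with
`z_i ≠ ± z_j` for `i ≠ j` and `z_i ∉ {0, 1, -1}` has exactly `2^n · (n+1)!` connected
components. -/
theorem Cn_arrangement_real_components (n : ℕ) :
    Nat.card (ConnectedComponents
      {z : Fin n → ℝ |
        (∀ i j, i ≠ j → z i ≠ z j ∧ z i ≠ -z j) ∧
          ∀ i, z i ≠ 0 ∧ z i ≠ 1 ∧ z i ≠ -1}) =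
      2 ^ n * Nat.factorial (n + 1) := by
  exact CnProof.main n
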